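/- arXiv:1012.0635 — 4 statements merged into one kernel-verified Lean document; each statement's English description precedes it below -/
import Mathlib

section
/- Let (G,<) be a bi-ordered group and a, b ∈ G with [a,b] > 1. Then for all integers m > 1, [a, b^m] > [a, b], where [a,b] = a⁻¹b⁻¹ab. -/
theorem commutator_pow_right_gt {G : Type*} [Group G] [LinearOrder G]
    [CovariantClass G G (· * ·) (· < ·)]
    [CovariantClass G G (Function.swap (· * ·)) (· < ·)]
    (a b : G) (h : 1 < a⁻¹ * b⁻¹ * a * b) :
    ∀ m : ℤ, 1 < m → a⁻¹ * b⁻¹ * a * b < a⁻¹ * (b ^ m)⁻¹ * a * b ^ m := by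
  have key : ∀ n : ℤ, a⁻¹ * (b ^ n)⁻¹ * a * b ^ n <
      a⁻¹ * (b ^ (n + 1))⁻¹ * a * b ^ (n + 1) := by
    intro n
    have hid : a⁻¹ * (b ^ (n + 1))⁻¹ * a * b ^ (n + 1) =
        (a⁻¹ * (b ^ n)⁻¹ * a * b ^ n) * ((b ^ n)⁻¹ * (a⁻¹ * b⁻¹ * a * b) * b ^ n) := by
      group
    have hc : 1 < (b ^ n)⁻¹ * (a⁻¹ * b⁻¹ * a * b) * b ^ n := by
      calc (1 : G) = (b ^ n)⁻¹ * 1 * b ^ n := by group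
        _ < (b ^ n)⁻¹ * (a⁻¹ * b⁻¹ * a * b) * b ^ n :=
          mul_lt_mul_left (mul_lt_mul_right h _) _
    rw [hid]
    exact lt_mul_of_one_lt_right' _ hc
  intro m hm
  exact Int.le_induction
    (m := 2) (motive := fun n _ => a⁻¹ * b⁻¹ * a * b < a⁻¹ * (b ^ n)⁻¹ * a * b ^ n)
    (by simpa using key 1)
    (fun n _ ih => ih.trans (key n)) m (by omega)
end

section
/- Let (G,<) be a bi-ordered group and a, b ∈ G with [a,b] > 1. Then for all integers m, n > 1, [a^n, b^m] > [a, b], where [a,b] = a⁻¹b⁻¹ab. -/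
section Aux

variable {G : Type*} [Group G] [LinearOrder G]
    [CovariantClass G G (· * ·) (· < ·)]
    [CovariantClass G G (Function.swap (· * ·)) (· < ·)]

private lemma conj_pos' (a : G) {t : G} (ht : 1 < t) : 1 < a⁻¹ * t * a := by
  have := mul_lt_mul_left (mul_lt_mul_right ht a⁻¹) a
  simpa using this

private lemma pos_n (a b : G) (h : 1 < a⁻¹ * b⁻¹ * a * b) :
    ∀ n : ℕ, 1 < (a ^ (n + 1))⁻¹ * b⁻¹ * a ^ (n + 1) * b := by
  intro n
  induction n with
  | zero => simpa using h
  | succ k ih =>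
    have key : (a ^ (k + 1 + 1))⁻¹ * b⁻¹ * a ^ (k + 1 + 1) * b
        = (a⁻¹ * ((a ^ (k + 1))⁻¹ * b⁻¹ * a ^ (k + 1) * b) * a) * (a⁻¹ * b⁻¹ * a * b) := by
      group
    rw [key]
    have := mul_lt_mul_of_lt_of_lt (conj_pos' a ih) h
    simpa using this

private lemma pos_nm (a b : G) (h : 1 < a⁻¹ * b⁻¹ * a * b) :
    ∀ n m : ℕ, 1 < (a ^ (n + 1))⁻¹ * (b ^ (m + 1))⁻¹ * a ^ (n + 1) * b ^ (m + 1) := by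
  intro n m
  induction m with
  | zero => simpa using pos_n a b h n
  | succ k ih =>
    have key : (a ^ (n + 1))⁻¹ * (b ^ (k + 1 + 1))⁻¹ * a ^ (n + 1) * b ^ (k + 1 + 1)
        = ((a ^ (n + 1))⁻¹ * b⁻¹ * a ^ (n + 1) * b)
          * (b⁻¹ * ((a ^ (n + 1))⁻¹ * (b ^ (k + 1))⁻¹ * a ^ (n + 1) * b ^ (k + 1)) * b) := by
      group
    rw [key]
    have := mul_lt_mul_of_lt_of_lt (pos_n a b h n) (conj_pos' b ih)
    simpa using this

end Aux

theorem commutator_pow_pow_gt {G : Type*} [Group G] [LinearOrder G]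
    [CovariantClass G G (· * ·) (· < ·)]
    [CovariantClass G G (Function.swap (· * ·)) (· < ·)]
    (a b : G) (h : 1 < a⁻¹ * b⁻¹ * a * b) :
    ∀ m n : ℤ, 1 < m → 1 < n →
      a⁻¹ * b⁻¹ * a * b < (a ^ n)⁻¹ * (b ^ m)⁻¹ * a ^ n * b ^ m := by
  intro m n hm hn
  obtain ⟨M, rfl⟩ : ∃ M : ℕ, m = ((M + 2 : ℕ) : ℤ) := by
    refine ⟨(m - 2).toNat, ?_⟩
    push_cast
    omega
  obtain ⟨N, rfl⟩ : ∃ N : ℕ, n = ((N + 2 : ℕ) : ℤ) := by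
    refine ⟨(n - 2).toNat, ?_⟩
    push_cast
    omega
  rw [zpow_natCast, zpow_natCast]
  -- step 1 : c a b < c (a^(N+2)) b
  have step1 : a⁻¹ * b⁻¹ * a * b < (a ^ (N + 2))⁻¹ * b⁻¹ * a ^ (N + 2) * b := by
    have key : (a ^ (N + 2))⁻¹ * b⁻¹ * a ^ (N + 2) * b
        = (a⁻¹ * ((a ^ (N + 1))⁻¹ * b⁻¹ * a ^ (N + 1) * b) * a) * (a⁻¹ * b⁻¹ * a * b) := by
      group
    rw [key]
    have := mul_lt_mul_left (conj_pos' a (pos_n a b h N)) (a⁻¹ * b⁻¹ * a * b)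
    simpa using this
  -- step 2 : c (a^(N+2)) b < c (a^(N+2)) (b^(M+2))
  have step2 : (a ^ (N + 2))⁻¹ * b⁻¹ * a ^ (N + 2) * b
      < (a ^ (N + 2))⁻¹ * (b ^ (M + 2))⁻¹ * a ^ (N + 2) * b ^ (M + 2) := by
    have key : (a ^ (N + 2))⁻¹ * (b ^ (M + 2))⁻¹ * a ^ (N + 2) * b ^ (M + 2)
        = ((a ^ (N + 2))⁻¹ * b⁻¹ * a ^ (N + 2) * b)
          * (b⁻¹ * ((a ^ (N + 2))⁻¹ * (b ^ (M + 1))⁻¹ * a ^ (N + 2) * b ^ (M + 1)) * b) := by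
      group
    rw [key]
    have h2 : 1 < (a ^ (N + 2))⁻¹ * (b ^ (M + 1))⁻¹ * a ^ (N + 2) * b ^ (M + 1) := by
      simpa using pos_nm a b h (N + 1) M
    have := mul_lt_mul_right (conj_pos' b h2) ((a ^ (N + 2))⁻¹ * b⁻¹ * a ^ (N + 2) * b)
    simpa using this
  exact step1.trans step2
end

section
/- Let (G,<_G) be a bi-ordered group and H ≤ G a finite index subgroup, with <_H the restriction of <_G to H. Then C_H = C_G ∩ H, where C_G and C_H denote the convex commutator subgroups of (G,<_G) and (H,<_H) respectively. -/
def IsConvex {G : Type*} [Group G] [LT G] (K : Subgroup G) : Prop :=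
  ∀ ⦃h h' g : G⦄, h ∈ K → h' ∈ K → h < g → g < h' → g ∈ K

def convexCommutator (G : Type*) [Group G] [LT G] : Subgroup G :=
  sInf {K : Subgroup G | IsConvex K ∧ commutator G ≤ K}

open scoped commutatorElement

section Aux

variable {G : Type*} [Group G] [LinearOrder G]
    [CovariantClass G G (· * ·) (· < ·)]
    [CovariantClass G G (Function.swap (· * ·)) (· < ·)]

local instance : CovariantClass G G (· * ·) (· ≤ ·) := covariantClass_le_of_lt _ _ _
local instance : CovariantClass G G (Function.swap (· * ·)) (· ≤ ·) :=
  covariantClass_le_of_lt _ _ _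

omit [CovariantClass G G (· * ·) (· < ·)]
    [CovariantClass G G (Function.swap (· * ·)) (· < ·)] in
theorem IsConvex.mem_of_le {K : Subgroup G} (hK : IsConvex K) {a b g : G}
    (ha : a ∈ K) (hb : b ∈ K) (h1 : a ≤ g) (h2 : g ≤ b) : g ∈ K := by
  rcases eq_or_lt_of_le h1 with rfl | h1
  · exact ha
  rcases eq_or_lt_of_le h2 with rfl | h2
  · exact hb
  exact hK ha hb h1 h2

theorem le_conj_pow {x y : G} (h : y ≤ x * y * x⁻¹) :
    ∀ n : ℕ, y ≤ x ^ n * y * (x ^ n)⁻¹ := by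
  intro n
  induction n with
  | zero => simp
  | succ n ih =>
      have h2 : x * (x ^ n * y * (x ^ n)⁻¹) * x⁻¹ = x ^ (n + 1) * y * (x ^ (n + 1))⁻¹ := by
        group
      calc y ≤ x * y * x⁻¹ := h
        _ ≤ x * (x ^ n * y * (x ^ n)⁻¹) * x⁻¹ := by
              have := mul_le_mul_left (mul_le_mul_right ih x) x⁻¹
              exact this
        _ = x ^ (n + 1) * y * (x ^ (n + 1))⁻¹ := h2

theorem conj_pow_le {x y : G} (h : x * y * x⁻¹ ≤ y) :
    ∀ n : ℕ, x ^ n * y * (x ^ n)⁻¹ ≤ y := by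
  intro n
  induction n with
  | zero => simp
  | succ n ih =>
      have h2 : x * (x ^ n * y * (x ^ n)⁻¹) * x⁻¹ = x ^ (n + 1) * y * (x ^ (n + 1))⁻¹ := by
        group
      calc x ^ (n + 1) * y * (x ^ (n + 1))⁻¹
          = x * (x ^ n * y * (x ^ n)⁻¹) * x⁻¹ := h2.symm
        _ ≤ x * y * x⁻¹ := by
              exact mul_le_mul_left (mul_le_mul_right ih x) x⁻¹
        _ ≤ y := h

/-- Key lemma: if `⁅x^n, y⁆` lies in a convex subgroup (n ≥ 1), so does `⁅x, y⁆`. -/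
theorem commutator_mem_of_pow {K : Subgroup G} (hK : IsConvex K) {x y : G} {n : ℕ}
    (hn : n ≠ 0) (h : ⁅x ^ n, y⁆ ∈ K) : ⁅x, y⁆ ∈ K := by
  obtain ⟨m, rfl⟩ := Nat.exists_eq_succ_of_ne_zero hn
  have hcomm : ∀ k : ℕ, ⁅x ^ k, y⁆ = (x ^ k * y * (x ^ k)⁻¹) * y⁻¹ := by
    intro k; group
  have h1 : ⁅x, y⁆ = (x * y * x⁻¹) * y⁻¹ := by group
  rcases le_total y (x * y * x⁻¹) with hle | hle
  · -- increasing case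
    have key : x * y * x⁻¹ ≤ x ^ (m + 1) * y * (x ^ (m + 1))⁻¹ := by
      have h2 : x * y * x⁻¹ ≤ x * (x ^ m * y * (x ^ m)⁻¹) * x⁻¹ :=
        mul_le_mul_left (mul_le_mul_right (le_conj_pow hle m) x) x⁻¹
      have h3 : x * (x ^ m * y * (x ^ m)⁻¹) * x⁻¹ = x ^ (m + 1) * y * (x ^ (m + 1))⁻¹ := by
        group
      exact h3 ▸ h2
    have hlow : (1 : G) ≤ (x * y * x⁻¹) * y⁻¹ := by
      have := mul_le_mul_left hle y⁻¹
      simpa using this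
    have hhigh : (x * y * x⁻¹) * y⁻¹ ≤ (x ^ (m + 1) * y * (x ^ (m + 1))⁻¹) * y⁻¹ :=
      mul_le_mul_left key y⁻¹
    rw [h1]
    exact hK.mem_of_le K.one_mem (by rw [hcomm (m + 1)] at h; exact h) hlow hhigh
  · -- decreasing case
    have key : x ^ (m + 1) * y * (x ^ (m + 1))⁻¹ ≤ x * y * x⁻¹ := by
      have h2 : x * (x ^ m * y * (x ^ m)⁻¹) * x⁻¹ ≤ x * y * x⁻¹ :=
        mul_le_mul_left (mul_le_mul_right (conj_pow_le hle m) x) x⁻¹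
      have h3 : x * (x ^ m * y * (x ^ m)⁻¹) * x⁻¹ = x ^ (m + 1) * y * (x ^ (m + 1))⁻¹ := by
        group
      exact h3 ▸ h2
    have hhigh : (x * y * x⁻¹) * y⁻¹ ≤ (1 : G) := by
      have := mul_le_mul_left hle y⁻¹
      simpa using this
    have hlow : (x ^ (m + 1) * y * (x ^ (m + 1))⁻¹) * y⁻¹ ≤ (x * y * x⁻¹) * y⁻¹ :=
      mul_le_mul_left key y⁻¹
    rw [h1]
    exact hK.mem_of_le (by rw [hcomm (m + 1)] at h; exact h) K.one_mem hlow hhigh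

/-- The convex hull of a subgroup is a subgroup. -/
def ordHull (S : Subgroup G) : Subgroup G where
  carrier := {g | ∃ a ∈ S, ∃ b ∈ S, a ≤ g ∧ g ≤ b}
  one_mem' := ⟨1, S.one_mem, 1, S.one_mem, le_refl 1, le_refl 1⟩
  mul_mem' := by
    rintro g g' ⟨a, ha, b, hb, hag, hgb⟩ ⟨a', ha', b', hb', hag', hgb'⟩
    exact ⟨a * a', S.mul_mem ha ha', b * b', S.mul_mem hb hb',
      mul_le_mul' hag hag', mul_le_mul' hgb hgb'⟩
  inv_mem' := by
    rintro g ⟨a, ha, b, hb, hag, hgb⟩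
    exact ⟨b⁻¹, S.inv_mem hb, a⁻¹, S.inv_mem ha,
      inv_le_inv_iff.mpr hgb, inv_le_inv_iff.mpr hag⟩

theorem le_ordHull (S : Subgroup G) : S ≤ ordHull S :=
  fun g hg => ⟨g, hg, g, hg, le_refl g, le_refl g⟩

theorem isConvex_ordHull (S : Subgroup G) : IsConvex (ordHull S) := by
  rintro h h' g ⟨a, ha, b, hb, hah, hhb⟩ ⟨a', ha', b', hb', hah', hhb'⟩ h1 h2
  exact ⟨a, ha, b', hb', hah.trans h1.le, h2.le.trans hhb'⟩

end Aux

theorem isConvex_convexCommutator (G : Type*) [Group G] [LT G] :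
    IsConvex (convexCommutator G) := by
  intro h h' g hh hh' h1 h2
  rw [convexCommutator, Subgroup.mem_sInf] at *
  intro K hK
  exact hK.1 (hh K hK) (hh' K hK) h1 h2

theorem commutator_le_convexCommutator (G : Type*) [Group G] [LT G] :
    commutator G ≤ convexCommutator G :=
  le_sInf fun _ hK => hK.2

theorem convexCommutator_of_finiteIndex {G : Type*} [Group G] [LinearOrder G]
    [CovariantClass G G (· * ·) (· < ·)]
    [CovariantClass G G (Function.swap (· * ·)) (· < ·)]
    (H : Subgroup G) [H.FiniteIndex] :
    (convexCommutator H).map H.subtype = convexCommutator G ⊓ H := by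
  apply le_antisymm
  · -- easy direction
    have hcomap : convexCommutator (↥H) ≤ (convexCommutator G).comap H.subtype := by
      apply sInf_le
      constructor
      · intro a b g ha hb h1 h2
        exact isConvex_convexCommutator G ha hb h1 h2
      · rw [commutator_def, Subgroup.commutator_le]
        intro g₁ _ g₂ _
        have : (H.subtype ⁅g₁, g₂⁆) = ⁅(g₁ : G), (g₂ : G)⁆ := by
          simp [commutatorElement_def]
        show H.subtype ⁅g₁, g₂⁆ ∈ convexCommutator G
        rw [this]
        exact commutator_le_convexCommutator G
          (Subgroup.commutator_mem_commutator (Subgroup.mem_top _) (Subgroup.mem_top _))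
    calc (convexCommutator H).map H.subtype
        ≤ ((convexCommutator G).comap H.subtype).map H.subtype :=
          Subgroup.map_mono hcomap
      _ = H.subtype.range ⊓ convexCommutator G := Subgroup.map_comap_eq _ _
      _ = convexCommutator G ⊓ H := by rw [H.range_subtype, inf_comm]
  · -- hard direction
    set S : Subgroup G := (convexCommutator H).map H.subtype with hS
    set N : Subgroup G := H.normalCore with hN
    have hNH : N ≤ H := H.normalCore_le
    have hn : N.index ≠ 0 := Subgroup.FiniteIndex.index_ne_zero
    -- every commutator of G lies in the convex hull of S
    have hcommK : ∀ x y : G, ⁅x, y⁆ ∈ ordHull S := by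
      intro x y
      have hx : x ^ N.index ∈ H := hNH (N.pow_index_mem x)
      have hy : y ^ N.index ∈ H := hNH (N.pow_index_mem y)
      have hbase : ⁅x ^ N.index, y ^ N.index⁆ ∈ ordHull S := by
        apply le_ordHull S
        refine ⟨⁅(⟨x ^ N.index, hx⟩ : H), (⟨y ^ N.index, hy⟩ : H)⁆, ?_, ?_⟩
        · exact commutator_le_convexCommutator (↥H)
            (Subgroup.commutator_mem_commutator (Subgroup.mem_top _) (Subgroup.mem_top _))
        · simp [commutatorElement_def]
      have step1 : ⁅x, y ^ N.index⁆ ∈ ordHull S :=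
        commutator_mem_of_pow (isConvex_ordHull S) hn hbase
      have step1' : ⁅y ^ N.index, x⁆ ∈ ordHull S := by
        rw [← commutatorElement_inv]
        exact (ordHull S).inv_mem step1
      have step2 : ⁅y, x⁆ ∈ ordHull S :=
        commutator_mem_of_pow (isConvex_ordHull S) hn step1'
      rw [← commutatorElement_inv]
      exact (ordHull S).inv_mem step2
    have hCG : convexCommutator G ≤ ordHull S := by
      apply sInf_le
      refine ⟨isConvex_ordHull S, ?_⟩
      rw [commutator_def, Subgroup.commutator_le]
      intro g₁ _ g₂ _
      exact hcommK g₁ g₂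
    rintro x ⟨hxC, hxH⟩
    obtain ⟨a, haS, b, hbS, hax, hxb⟩ := hCG hxC
    obtain ⟨a₀, ha₀, rfl⟩ := haS
    obtain ⟨b₀, hb₀, rfl⟩ := hbS
    refine ⟨⟨x, hxH⟩, ?_, rfl⟩
    exact (isConvex_convexCommutator (↥H)).mem_of_le ha₀ hb₀ hax hxb
end

section
/- Let G be a group that is an HNN-extension of a group H by an automorphism φ (i.e., G ≅ H ⋊_φ ℤ). Then G is bi-orderable if and only if there exists a bi-ordering of H which is preserved by φ. -/
/-- A group is bi-orderable if it admits a total order invariant under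
multiplication on both sides. -/
def BiOrderable (G : Type*) [Group G] : Prop :=
  ∃ lo : LinearOrder G,
    (∀ a b c : G, lo.lt a b → lo.lt (c * a) (c * b)) ∧
    (∀ a b c : G, lo.lt a b → lo.lt (a * c) (b * c))

open SemidirectProduct

theorem biorderable_semidirect_iff {H : Type*} [Group H] (φ : H ≃* H) :
    BiOrderable (H ⋊[zpowersHom (MulAut H) φ] Multiplicative ℤ) ↔
      ∃ lo : LinearOrder H,
        (∀ a b c : H, lo.lt a b → lo.lt (c * a) (c * b)) ∧
        (∀ a b c : H, lo.lt a b → lo.lt (a * c) (b * c)) ∧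
        (∀ a b : H, lo.lt a b → lo.lt (φ a) (φ b)) := by
  constructor
  · rintro ⟨lo, hl, hr⟩
    letI := lo
    refine ⟨LinearOrder.lift' (inl : H →* H ⋊[zpowersHom (MulAut H) φ] Multiplicative ℤ)
      inl_injective, ?_, ?_, ?_⟩
    · intro a b c h
      show (inl (c * a) : H ⋊[zpowersHom (MulAut H) φ] Multiplicative ℤ) < inl (c * b)
      rw [map_mul, map_mul]
      exact hl _ _ _ h
    · intro a b c h
      show (inl (a * c) : H ⋊[zpowersHom (MulAut H) φ] Multiplicative ℤ) < inl (b * c)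
      rw [map_mul, map_mul]
      exact hr _ _ _ h
    · intro a b h
      show (inl (φ a) : H ⋊[zpowersHom (MulAut H) φ] Multiplicative ℤ) < inl (φ b)
      have key : ∀ x : H,
          (inl (φ x) : H ⋊[zpowersHom (MulAut H) φ] Multiplicative ℤ) =
            inr (Multiplicative.ofAdd 1) * inl x * (inr (Multiplicative.ofAdd 1))⁻¹ := by
        intro x
        have := inl_aut (φ := zpowersHom (MulAut H) φ) (Multiplicative.ofAdd 1) x
        simpa using this
      rw [key a, key b]
      exact hr _ _ _ (hl _ _ _ h)
  · rintro ⟨lo, hl, hr, hφ⟩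
    letI := lo
    have h1 : StrictMono ⇑φ := fun a b h => hφ a b h
    have h2 : StrictMono ⇑(φ⁻¹ : MulAut H) := by
      intro a b h
      rw [← h1.lt_iff_lt]
      simpa using h
    have key : ∀ n : ℤ, StrictMono ⇑(φ ^ n : MulAut H) := by
      intro n
      induction n using Int.induction_on with
      | zero => simpa using strictMono_id
      | succ k ih =>
          intro a b h
          have : (φ ^ ((k : ℤ) + 1) : MulAut H) = φ ^ (k : ℤ) * φ := by
            rw [zpow_add_one]
          rw [this]
          exact ih (h1 h)
      | pred k ih =>
          intro a b h
          have : (φ ^ (-(k : ℤ) - 1) : MulAut H) = φ ^ (-(k : ℤ)) * φ⁻¹ := by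
            rw [zpow_sub_one]
          rw [this]
          exact ih (h2 h)
    set G := H ⋊[zpowersHom (MulAut H) φ] Multiplicative ℤ
    let f : G → Lex (ℤ × H) := fun g => toLex (Multiplicative.toAdd g.right, g.left)
    have hf : Function.Injective f := by
      intro a b hab
      have := congrArg ofLex hab
      exact SemidirectProduct.ext (congrArg Prod.snd this)
        (by simpa [f] using congrArg Prod.fst this)
    have flt : ∀ a b : G, f a < f b ↔
        (Multiplicative.toAdd a.right < Multiplicative.toAdd b.right ∨
          Multiplicative.toAdd a.right = Multiplicative.toAdd b.right ∧ a.left < b.left) := by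
      intro a b
      exact Prod.Lex.lt_iff
    refine ⟨LinearOrder.lift' f hf, ?_, ?_⟩
    · intro a b c h
      show f (c * a) < f (c * b)
      have h' : f a < f b := h
      rw [flt] at h' ⊢
      simp only [mul_left, mul_right, toAdd_mul] at *
      rcases h' with h' | ⟨he, h'⟩
      · exact Or.inl (by omega)
      · refine Or.inr ⟨by omega, ?_⟩
        have : (zpowersHom (MulAut H) φ c.right) a.left <
            (zpowersHom (MulAut H) φ c.right) b.left := by
          simpa [zpowersHom_apply] using key (Multiplicative.toAdd c.right) h'
        exact hl _ _ _ this
    · intro a b c h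
      show f (a * c) < f (b * c)
      have h' : f a < f b := h
      rw [flt] at h' ⊢
      simp only [mul_left, mul_right, toAdd_mul] at *
      rcases h' with h' | ⟨he, h'⟩
      · exact Or.inl (by omega)
      · refine Or.inr ⟨by omega, ?_⟩
        have he' : a.right = b.right := Multiplicative.toAdd.injective he
        rw [he']
        exact hr _ _ _ h'
end
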